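/- For probabilities λ1 ≥ λ2 ≥ λ3 ≥ 0 with λ1+λ2+λ3 = 1 and fixed purity λ1²+λ2²+λ3² = γ, the Shannon entropy H(λ) = -∑ λi log λi is maximized when λ2 = λ3, i.e., at λ1 = 1/3 + √((2/3)(γ - 1/3)) and λ2 = λ3 = (1-λ1)/2. -/

import Mathlib

open Real

/-- concavity-type inequality for log -/
lemma log3 {a b c : ℝ} (hc : 0 < c) (hcb : c ≤ b) (hba : b ≤ a) :
    (b - c) * Real.log a + (c - a) * Real.log b + (a - b) * Real.log c ≤ 0 := by
  have hb : 0 < b := lt_of_lt_of_le hc hcb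
  have ha : 0 < a := lt_of_lt_of_le hb hba
  have h1 : Real.log a - Real.log b ≤ (a - b) / b := by
    rw [← Real.log_div ha.ne' hb.ne']
    have := Real.log_le_sub_one_of_pos (div_pos ha hb)
    have h2 : a / b - 1 = (a - b) / b := by field_simp
    linarith [h2 ▸ this]
  have h2 : (b - c) / b ≤ Real.log b - Real.log c := by
    rw [← Real.log_div hb.ne' hc.ne']
    have := Real.log_le_sub_one_of_pos (div_pos hc hb)
    have h3 : Real.log (b/c) = - Real.log (c/b) := by
      rw [← Real.log_inv]; congr 1; field_simp
    have h4 : c / b - 1 = -((b - c)/b) := by field_simp; ring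
    rw [h3]; rw [h4] at this; linarith
  have key : (b - c) * Real.log a + (c - a) * Real.log b + (a - b) * Real.log c
      = (b - c) * (Real.log a - Real.log b) - (a - b) * (Real.log b - Real.log c) := by ring
  rw [key]
  have hbc : 0 ≤ b - c := by linarith
  have hab : 0 ≤ a - b := by linarith
  have t1 : (b - c) * (Real.log a - Real.log b) ≤ (b - c) * ((a - b)/b) :=
    mul_le_mul_of_nonneg_left h1 hbc
  have t2 : (a - b) * ((b - c)/b) ≤ (a - b) * (Real.log b - Real.log c) :=
    mul_le_mul_of_nonneg_left h2 hab
  have : (b - c) * ((a - b)/b) = (a - b) * ((b - c)/b) := by ring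
  linarith

noncomputable def Bf (γ x : ℝ) : ℝ := ((1 - x) + Real.sqrt (2*γ - 1 + 2*x - 3*x^2)) / 2
noncomputable def Cf (γ x : ℝ) : ℝ := ((1 - x) - Real.sqrt (2*γ - 1 + 2*x - 3*x^2)) / 2
noncomputable def Ff (γ x : ℝ) : ℝ :=
  -(x * Real.log x + Bf γ x * Real.log (Bf γ x) + Cf γ x * Real.log (Cf γ x))

set_option maxHeartbeats 1000000 in
lemma F_mono (γ a : ℝ) (hγ1 : 1/3 ≤ γ) (hγ2 : γ ≤ 1)
    (ha3 : 1/3 ≤ a)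
    (hqa : 0 ≤ 2*a^2 - 2*a + 1 - γ)
    (hra : 0 ≤ 6*a^2 - 4*a + 1 - γ)
    (hal : a ≤ 1/3 + Real.sqrt ((2/3) * (γ - 1/3))) :
    MonotoneOn (Ff γ) (Set.Icc a (1/3 + Real.sqrt ((2/3) * (γ - 1/3)))) := by
  have hs0 : 0 ≤ Real.sqrt ((2/3) * (γ - 1/3)) := Real.sqrt_nonneg _
  have hs2 : Real.sqrt ((2/3) * (γ - 1/3)) ^ 2 = (2/3) * (γ - 1/3) :=
    Real.sq_sqrt (by linarith)
  set s : ℝ := Real.sqrt ((2/3) * (γ - 1/3)) with hsdef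
  set l1 : ℝ := 1/3 + s with hl1def
  have hl1 : l1 ≤ 1 := by
    rw [hl1def]
    nlinarith [hs2, hs0, sq_nonneg (s - 2/3)]
  have key : ∀ x ∈ Set.Ioo a l1, ∃ d, 0 ≤ d ∧ HasDerivAt (Ff γ) d x := by
    rintro x ⟨hxa, hxl⟩
    have hx3 : 1/3 < x := lt_of_le_of_lt ha3 hxa
    have hx0 : 0 < x := by linarith
    have hx1 : x < 1 := lt_of_lt_of_le hxl hl1
    have hDpos : 0 < 2*γ - 1 + 2*x - 3*x^2 := by
      have h1 : 0 < l1 - x := by linarith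
      have h2 : 0 < s + (x - 1/3) := by linarith
      nlinarith [mul_pos h1 h2]
    set sD : ℝ := Real.sqrt (2*γ - 1 + 2*x - 3*x^2) with hsDdef
    have hsD0 : 0 < sD := Real.sqrt_pos.2 hDpos
    have hsD2 : sD ^ 2 = 2*γ - 1 + 2*x - 3*x^2 := Real.sq_sqrt hDpos.le
    -- q(x) > 0
    have hqx : 0 < 2*x^2 - 2*x + 1 - γ := by
      rcases lt_or_ge γ (1/2) with h | h
      · nlinarith [sq_nonneg (x - 1/2)]
      · have ha2 : 1/2 ≤ a := by
          by_contra h'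
          push_neg at h'
          nlinarith [mul_pos (show (0:ℝ) < 1/2 - a by linarith)
            (show (0:ℝ) < a - 1/6 by linarith)]
        nlinarith [mul_pos (show (0:ℝ) < x - a by linarith)
          (show (0:ℝ) < x + a - 1 by linarith)]
    -- r(x) > 0
    have hrx : 0 < 6*x^2 - 4*x + 1 - γ := by
      nlinarith [mul_pos (show (0:ℝ) < x - a by linarith)
        (show (0:ℝ) < 3*x + 3*a - 2 by linarith)]
    -- C > 0
    have hCpos : 0 < Cf γ x := by
      have h1 : sD < 1 - x := by
        rw [hsDdef, Real.sqrt_lt' (by linarith : (0:ℝ) < 1 - x)]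
        nlinarith
      simp only [Cf, ← hsDdef]
      linarith
    -- B < x
    have hBx : Bf γ x < x := by
      have h1 : sD < 3*x - 1 := by
        rw [hsDdef, Real.sqrt_lt' (by linarith : (0:ℝ) < 3*x - 1)]
        nlinarith
      simp only [Bf, ← hsDdef]
      linarith
    have hCB : Cf γ x < Bf γ x := by
      simp only [Bf, Cf, ← hsDdef]; linarith
    have hBpos : 0 < Bf γ x := lt_trans hCpos hCB
    -- derivative of inner polynomial
    have hD' : HasDerivAt (fun y : ℝ => 2*γ - 1 + 2*y - 3*y^2) (2 - 6*x) x := by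
      have h1 : HasDerivAt (fun y : ℝ => y ^ 2) (2 * x) x := by
        simpa using hasDerivAt_pow 2 x
      have h2 := (((hasDerivAt_id x).const_mul (2:ℝ)).const_add (2*γ - 1)).sub
        (h1.const_mul (3:ℝ))
      exact h2.congr_deriv (by ring)
    have hsq' : HasDerivAt (fun y : ℝ => Real.sqrt (2*γ - 1 + 2*y - 3*y^2))
        (1 / (2 * sD) * (2 - 6*x)) x := by
      have := (Real.hasDerivAt_sqrt (x := 2*γ - 1 + 2*x - 3*x^2) hDpos.ne').comp x hD'
      simpa [hsDdef, Function.comp_def] using this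
    set bp : ℝ := (-1 + 1 / (2 * sD) * (2 - 6*x)) / 2 with hbpdef
    set cp : ℝ := (-1 - 1 / (2 * sD) * (2 - 6*x)) / 2 with hcpdef
    have hB' : HasDerivAt (Bf γ) bp x := by
      have h1 : HasDerivAt (fun y : ℝ => 1 - y) (-1) x := by
        simpa using (hasDerivAt_id x).const_sub (1:ℝ)
      exact (h1.add hsq').div_const 2
    have hC' : HasDerivAt (Cf γ) cp x := by
      have h1 : HasDerivAt (fun y : ℝ => 1 - y) (-1) x := by
        simpa using (hasDerivAt_id x).const_sub (1:ℝ)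
      exact (h1.sub hsq').div_const 2
    have hmx : HasDerivAt (fun y : ℝ => y * Real.log y) (Real.log x + 1) x :=
      Real.hasDerivAt_mul_log hx0.ne'
    have hmB : HasDerivAt (fun y : ℝ => Bf γ y * Real.log (Bf γ y))
        ((Real.log (Bf γ x) + 1) * bp) x :=
      (Real.hasDerivAt_mul_log hBpos.ne').comp x hB'
    have hmC : HasDerivAt (fun y : ℝ => Cf γ y * Real.log (Cf γ y))
        ((Real.log (Cf γ x) + 1) * cp) x :=
      (Real.hasDerivAt_mul_log hCpos.ne').comp x hC'
    have hF : HasDerivAt (Ff γ)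
        (-((Real.log x + 1) + (Real.log (Bf γ x) + 1) * bp + (Real.log (Cf γ x) + 1) * cp))
        x := by
      exact ((hmx.add hmB).add hmC).neg
    refine ⟨_, ?_, hF⟩
    -- sign of the derivative
    have hBval : Bf γ x = ((1 - x) + sD) / 2 := by simp [Bf, hsDdef]
    have hCval : Cf γ x = ((1 - x) - sD) / 2 := by simp [Cf, hsDdef]
    set LX := Real.log x
    set LB := Real.log (Bf γ x)
    set LC := Real.log (Cf γ x)
    have hS : (Bf γ x - Cf γ x) * LX + (Cf γ x - x) * LB + (x - Bf γ x) * LC ≤ 0 :=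
      log3 hCpos hCB.le hBx.le
    have hE : (LX + 1) + (LB + 1) * bp + (LC + 1) * cp
        = ((Bf γ x - Cf γ x) * LX + (Cf γ x - x) * LB + (x - Bf γ x) * LC) / sD := by
      rw [hBval, hCval, hbpdef, hcpdef]
      field_simp
      ring
    rw [hE]
    have : ((Bf γ x - Cf γ x) * LX + (Cf γ x - x) * LB + (x - Bf γ x) * LC) / sD ≤ 0 :=
      div_nonpos_of_nonpos_of_nonneg hS hsD0.le
    linarith
  apply monotoneOn_of_deriv_nonneg (convex_Icc a l1)
  · -- continuity
    have h1 : Continuous (fun y : ℝ => Real.sqrt (2*γ - 1 + 2*y - 3*y^2)) :=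
      Real.continuous_sqrt.comp (by continuity)
    have hBc : Continuous (Bf γ) := by
      exact ((continuous_const.sub continuous_id).add h1).div_const 2
    have hCc : Continuous (Cf γ) := by
      exact ((continuous_const.sub continuous_id).sub h1).div_const 2
    have : Continuous (Ff γ) := by
      exact ((Real.continuous_mul_log.add
        (Real.continuous_mul_log.comp hBc)).add (Real.continuous_mul_log.comp hCc)).neg
    exact this.continuousOn
  · intro x hx
    rw [interior_Icc] at hx
    obtain ⟨d, _, hd⟩ := key x hx
    exact hd.differentiableAt.differentiableWithinAt
  · intro x hx
    rw [interior_Icc] at hx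
    obtain ⟨d, hd0, hd⟩ := key x hx
    rw [hd.deriv]
    exact hd0

/-- For probabilities λ1 ≥ λ2 ≥ λ3 ≥ 0 summing to 1 with purity γ, the Shannon
entropy (base 2) is at most the entropy of the spectrum
(1/3 + √((2/3)(γ-1/3)), (1-λ1)/2, (1-λ1)/2), and that spectrum attains it
(it satisfies the constraints and has λ2 = λ3). -/
theorem stmt0 (γ : ℝ) (hγ1 : 1/3 ≤ γ) (hγ2 : γ ≤ 1) (lam : Fin 3 → ℝ)
    (h10 : lam 1 ≤ lam 0) (h21 : lam 2 ≤ lam 1) (hpos : 0 ≤ lam 2)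
    (hsum : ∑ i, lam i = 1) (hpur : ∑ i, lam i ^ 2 = γ) :
    let l1 : ℝ := 1/3 + Real.sqrt ((2/3) * (γ - 1/3))
    (-∑ i, lam i * Real.logb 2 (lam i)) ≤
      -(l1 * Real.logb 2 l1) - 2 * ((1 - l1)/2 * Real.logb 2 ((1 - l1)/2)) := by
  intro l1
  set a : ℝ := lam 0 with hadef
  set b : ℝ := lam 1 with hbdef
  set c : ℝ := lam 2 with hcdef
  rw [Fin.sum_univ_three] at hsum hpur
  rw [Fin.sum_univ_three]
  have hsum' : a + b + c = 1 := hsum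
  have hpur' : a^2 + b^2 + c^2 = γ := hpur
  have hs0 : 0 ≤ Real.sqrt ((2/3) * (γ - 1/3)) := Real.sqrt_nonneg _
  have hs2 : Real.sqrt ((2/3) * (γ - 1/3)) ^ 2 = (2/3) * (γ - 1/3) :=
    Real.sq_sqrt (by linarith)
  set s : ℝ := Real.sqrt ((2/3) * (γ - 1/3)) with hsdef
  have hl1s : l1 = 1/3 + s := rfl
  have ha3 : 1/3 ≤ a := by linarith
  have hqa : 0 ≤ 2*a^2 - 2*a + 1 - γ := by
    have hbc : 0 ≤ b * c := mul_nonneg (hpos.trans h21) hpos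
    have h : 2*a^2 - 2*a + 1 - γ = 2*(b*c) := by
      linear_combination (a - b - c - 1) * hsum' + hpur'
    linarith
  have hra : 0 ≤ 6*a^2 - 4*a + 1 - γ := by
    have hab : 0 ≤ (a - b) * (a - c) :=
      mul_nonneg (by linarith) (by linarith)
    have h : 6*a^2 - 4*a + 1 - γ = 2*((a - b)*(a - c)) := by
      linear_combination (3*a - b - c - 1) * hsum' + hpur'
    linarith
  have hDaEq : (b - c)^2 = 2*γ - 1 + 2*a - 3*a^2 := by
    linear_combination (a - b - c - 1) * hsum' + 2*hpur'
  have hal : a ≤ l1 := by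
    rw [hl1s]
    have h1 : (a - 1/3)^2 ≤ s^2 := by nlinarith [sq_nonneg (b - c)]
    have h2 := Real.sqrt_le_sqrt h1
    rw [Real.sqrt_sq (by linarith : (0:ℝ) ≤ a - 1/3), Real.sqrt_sq hs0] at h2
    linarith
  -- identify b, c with Bf, Cf
  have hsqrtDa : Real.sqrt (2*γ - 1 + 2*a - 3*a^2) = b - c := by
    rw [← hDaEq, Real.sqrt_sq (by linarith : (0:ℝ) ≤ b - c)]
  have hb : Bf γ a = b := by
    rw [Bf, hsqrtDa]; linarith
  have hc : Cf γ a = c := by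
    rw [Cf, hsqrtDa]; linarith
  -- value at l1
  have hDl1 : 2*γ - 1 + 2*l1 - 3*l1^2 = 0 := by
    rw [hl1s]; linear_combination (-3 : ℝ) * hs2
  have hBl1 : Bf γ l1 = (1 - l1)/2 := by
    rw [Bf, hDl1, Real.sqrt_zero]; ring
  have hCl1 : Cf γ l1 = (1 - l1)/2 := by
    rw [Cf, hDl1, Real.sqrt_zero]; ring
  have hmono := F_mono γ a hγ1 hγ2 ha3 hqa hra hal
  have hFF : Ff γ a ≤ Ff γ l1 :=
    hmono ⟨le_refl a, hal⟩ ⟨hal, le_refl l1⟩ hal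
  rw [Ff, Ff, hb, hc, hBl1, hCl1] at hFF
  have hlog2 : (0:ℝ) < Real.log 2 := Real.log_pos (by norm_num)
  simp only [Real.logb]
  calc -(a * (Real.log a / Real.log 2) + b * (Real.log b / Real.log 2)
        + c * (Real.log c / Real.log 2))
      = (-(a * Real.log a + b * Real.log b + c * Real.log c)) / Real.log 2 := by ring
    _ ≤ (-(l1 * Real.log l1 + (1 - l1)/2 * Real.log ((1 - l1)/2)
          + (1 - l1)/2 * Real.log ((1 - l1)/2))) / Real.log 2 := by
        exact (div_le_div_iff_of_pos_right hlog2).mpr hFF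
    _ = -(l1 * (Real.log l1 / Real.log 2))
          - 2 * ((1 - l1)/2 * (Real.log ((1 - l1)/2) / Real.log 2)) := by ring
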